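/- For every j ≥ 1, the tail sum Σ_{i=2j+1}^∞ (p_i + p_{i+1})/p_i² is strictly less than 2(2+√2)/r^{2j} + 1/(8·r^{6j}), where r = 1+√2. -/

import Mathlib

/-- The Pell numbers: `p 0 = 0`, `p 1 = 1`, `p 2 = 2`, `p (n+2) = 2 p (n+1) + p n`. -/
def pell : ℕ → ℤ
  | 0 => 0
  | 1 => 1
  | (n+2) => 2 * pell (n+1) + pell n

noncomputable abbrev c2 : ℝ := Real.sqrt 2

lemma c2_sq : c2 ^ 2 = 2 := Real.sq_sqrt (by norm_num)
lemma c2_gt : 1 < c2 := by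
  have := Real.lt_sqrt (x := 1) (y := 2) (by norm_num)
  simpa [c2] using (by rw [this]; norm_num : (1:ℝ) < Real.sqrt 2)
lemma c2_lt : c2 < 3/2 := by
  nlinarith [c2_sq, c2_gt]

lemma pell_closed : ∀ n : ℕ, (2 * c2) * (pell n : ℝ) = (1 + c2)^n - (1 - c2)^n
  | 0 => by simp [pell]
  | 1 => by simp [pell]; ring
  | (n+2) => by
    have h1 := pell_closed (n+1)
    have h2 := pell_closed n
    have hc := c2_sq
    show (2*c2) * ((2 * pell (n+1) + pell n : ℤ) : ℝ) = _
    push_cast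
    have e1 : (1+c2)^(n+2) = (1+c2)^n * (1+c2)^2 := by ring
    have e2 : (1-c2)^(n+2) = (1-c2)^n * (1-c2)^2 := by ring
    have e3 : (1+c2)^(n+1) = (1+c2)^n * (1+c2) := by ring
    have e4 : (1-c2)^(n+1) = (1-c2)^n * (1-c2) := by ring
    rw [e3, e4] at h1
    rw [e1, e2]
    linear_combination 2*h1 + h2 - ((1+c2)^n - (1-c2)^n) * hc

lemma pell_nonneg : ∀ n : ℕ, (0:ℤ) ≤ pell n
  | 0 => le_refl 0
  | 1 => by norm_num [pell]
  | (n+2) => by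
    have h1 := pell_nonneg (n+1)
    have h2 := pell_nonneg n
    show (0:ℤ) ≤ 2 * pell (n+1) + pell n
    linarith

lemma pell_lb : ∀ n : ℕ, (2:ℤ)^n ≤ pell (n+1)
  | 0 => by norm_num [pell]
  | 1 => by norm_num [pell]
  | (n+2) => by
    have h1 := pell_lb (n+1)
    have h2 := pell_lb n
    show (2:ℤ)^(n+2) ≤ 2 * pell (n+2) + pell (n+1)
    have : (2:ℤ)^(n+2) = 2 * 2^(n+1) := by ring
    have h0 : (0:ℤ) ≤ 2^n := by positivity
    linarith

lemma pell_mono (n : ℕ) : pell n ≤ pell (n+1) := by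
  match n with
  | 0 => norm_num [pell]
  | (m+1) =>
    show pell (m+1) ≤ 2 * pell (m+1) + pell m
    have := pell_nonneg m
    have := pell_nonneg (m+1)
    linarith

lemma pell_succ_le (n : ℕ) : pell (n+2) ≤ 3 * pell (n+1) := by
  show 2 * pell (n+1) + pell n ≤ 3 * pell (n+1)
  have := pell_mono n
  linarith

lemma pell_pos (n : ℕ) : (0:ℤ) < pell (n+1) :=
  lt_of_lt_of_le (by positivity) (pell_lb n)

lemma spow (n : ℕ) : (1-c2)^n * (1+c2)^n = (-1)^n := by
  rw [← mul_pow]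
  have h : (1-c2)*(1+c2) = -1 := by nlinarith [c2_sq]
  rw [h]
lemma core_odd (a p q : ℝ) (ha : 1 ≤ a)
    (hp : p = (a^2+1)/(2*c2*a)) (hq : q = ((3+2*c2)*a^2-1)/(2*c2*(1+c2)*a)) :
    (p+q)/p^2 ≤ 4*(1+c2)/a - (3+c2)/a^3 := by
  have hc := c2_sq; have h1 := c2_gt; have h2 := c2_lt
  have ha0 : (0:ℝ) < a := by linarith
  have e : (p+q)/p^2 = 4*a*((3+2*c2)*a^2+1)/((1+c2)*(a^2+1)^2) := by
    subst hp hq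
    field_simp
    linear_combination (2+6*a^2) * hc
  rw [e, show 4*(1+c2)/a - (3+c2)/a^3 = (4*(1+c2)*a^2-(3+c2))/a^3 from by
    field_simp]
  rw [div_le_div_iff₀ (by positivity) (by positivity)]
  have diff : (4*(1+c2)*a^2-(3+c2))*((1+c2)*(a^2+1)^2) - 4*a*((3+2*c2)*a^2+1)*a^3
      = (15+12*c2)*a^4+2*a^2-(5+4*c2) := by
    linear_combination (4*a^6+7*a^4+2*a^2-1) * hc
  have ha4 : 1 ≤ a^4 := by nlinarith [ha, sq_nonneg (a-1), sq_nonneg (a^2-1)]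
  nlinarith [diff, ha4, h1, h2, sq_nonneg a, ha]

lemma core_even (b p q : ℝ) (hb : 4 ≤ b)
    (hp : p = (b^2-1)/(2*c2*b)) (hq : q = ((3+2*c2)*b^2+1)/(2*c2*(1+c2)*b)) :
    (p+q)/p^2 ≤ 4*(1+c2)/b + (31+22*c2)/b^3 := by
  have hc := c2_sq; have h1 := c2_gt; have h2 := c2_lt
  have hb0 : (0:ℝ) < b := by linarith
  have hb1 : (0:ℝ) < b^2 - 1 := by nlinarith
  have e : (p+q)/p^2 = 4*b*((3+2*c2)*b^2-1)/((1+c2)*(b^2-1)^2) := by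
    subst hp hq
    have h1' : (1:ℝ)+c2 ≠ 0 := by positivity
    have hc0 : c2 ≠ 0 := by positivity
    have hbne : b ≠ 0 := ne_of_gt hb0
    have hb1' : b^2-1 ≠ 0 := ne_of_gt hb1
    field_simp
    linear_combination (-2+6*b^2) * hc
  rw [e, show 4*(1+c2)/b + (31+22*c2)/b^3 = (4*(1+c2)*b^2+(31+22*c2))/b^3 from by
    field_simp]
  rw [div_le_div_iff₀ (by positivity) (by positivity)]
  have diff : (4*(1+c2)*b^2+(31+22*c2))*((1+c2)*(b^2-1)^2) - 4*b*((3+2*c2)*b^2-1)*b^3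
      = (55+37*c2)*b^4-(138+98*c2)*b^2+(75+53*c2) := by
    linear_combination (4*b^6+14*b^4-40*b^2+22) * hc
  have hb2 : 16 ≤ b^2 := by nlinarith
  nlinarith [diff, hb2, h1, h2, sq_nonneg b]

lemma one_lt_r : (2:ℝ) < 1 + c2 := by have := c2_gt; linarith

lemma pair_bound (n : ℕ) (hn : 3 ≤ n) (hodd : Odd n) :
    ((pell n:ℝ)+(pell (n+1):ℝ))/(pell n:ℝ)^2
      + ((pell (n+1):ℝ)+(pell (n+2):ℝ))/(pell (n+1):ℝ)^2
      ≤ (8+4*c2)/(1+c2)^n := by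
  have hc := c2_sq; have h1 := c2_gt; have h2 := c2_lt
  set a : ℝ := (1+c2)^n with ha_def
  set b : ℝ := (1+c2)^(n+1) with hb_def
  have hr0 : (0:ℝ) < 1 + c2 := by linarith
  have ha0 : (0:ℝ) < a := by positivity
  have hb0 : (0:ℝ) < b := by positivity
  have ha1 : (1:ℝ) ≤ a := one_le_pow₀ (by linarith)
  have hb4 : (4:ℝ) ≤ b := by
    calc (4:ℝ) ≤ 2^(n+1) := by
          calc (4:ℝ) = 2^2 := by norm_num
          _ ≤ 2^(n+1) := pow_le_pow_right₀ (by norm_num) (by omega)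
    _ ≤ b := pow_le_pow_left₀ (by norm_num) (by linarith) _
  have hba : b = (1+c2)*a := by rw [ha_def, hb_def]; ring
  have hs1 : (1-c2)^n * a = -1 := by
    rw [ha_def, spow n, hodd.neg_one_pow]
  have hs2 : (1-c2)^(n+1) * b = 1 := by
    rw [hb_def, spow (n+1), Even.neg_one_pow hodd.add_one]
  have hs3 : (1-c2)^(n+2) * ((1+c2)*b) = -1 := by
    have : (1-c2)^(n+2) * (1+c2)^(n+2) = (-1)^(n+2) := spow (n+2)
    have ho2 : Odd (n+2) := by rcases hodd with ⟨m,hm⟩; exact ⟨m+1, by omega⟩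
    rw [ho2.neg_one_pow] at this
    rw [hb_def, show (1+c2)*(1+c2)^(n+1) = (1+c2)^(n+2) from by ring]
    exact this
  have hcl1 := pell_closed n
  have hcl2 := pell_closed (n+1)
  have hcl3 := pell_closed (n+2)
  rw [show (1+c2)^(n+1) = b from rfl] at hcl2
  rw [show (1+c2)^n = a from rfl] at hcl1
  rw [show (1+c2)^(n+2) = (1+c2)*b from by rw [hb_def]; ring] at hcl3
  have hc2ne : c2 ≠ 0 := by positivity
  have hane : a ≠ 0 := ne_of_gt ha0
  have hbne : b ≠ 0 := ne_of_gt hb0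
  have hrne : (1:ℝ)+c2 ≠ 0 := ne_of_gt hr0
  have hp1 : (pell n:ℝ) = (a^2+1)/(2*c2*a) := by
    field_simp
    linear_combination a * hcl1 - hs1
  have hq1 : (pell (n+1):ℝ) = ((3+2*c2)*a^2-1)/(2*c2*(1+c2)*a) := by
    field_simp
    linear_combination ((1+c2)*a) * hcl2 - hs2 + a^2*hc
  have hp2 : (pell (n+1):ℝ) = (b^2-1)/(2*c2*b) := by
    field_simp
    linear_combination b * hcl2 - hs2
  have hq2 : (pell (n+2):ℝ) = ((3+2*c2)*b^2+1)/(2*c2*(1+c2)*b) := by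
    field_simp
    linear_combination ((1+c2)*b) * hcl3 - hs3 + b^2*hc
  have t1 := core_odd a _ _ ha1 hp1 hq1
  have t2 := core_even b _ _ hb4 hp2 hq2
  have hend : (4*(1+c2)/a - (3+c2)/a^3) + (4*(1+c2)/b + (31+22*c2)/b^3) = (8+4*c2)/a := by
    rw [hba]
    field_simp
    linear_combination (-(c2^2+6*c2+14)) * hc
  calc _ ≤ (4*(1+c2)/a - (3+c2)/a^3) + (4*(1+c2)/b + (31+22*c2)/b^3) := add_le_add t1 t2
    _ = (8+4*c2)/a := hend

theorem stmt_4 (j : ℕ) (hj : 1 ≤ j) :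
    ∑' i : ℕ, ((pell (2*j+1+i) : ℝ) + (pell (2*j+2+i) : ℝ)) / (pell (2*j+1+i) : ℝ) ^ 2
      < 2 * (2 + Real.sqrt 2) / (1 + Real.sqrt 2) ^ (2*j)
        + 1 / (8 * (1 + Real.sqrt 2) ^ (6*j)) := by
  have hc := c2_sq; have h1 := c2_gt; have h2 := c2_lt
  have hr0 : (0:ℝ) < 1 + c2 := by linarith
  set f : ℕ → ℝ := fun i =>
    ((pell (2*j+1+i) : ℝ) + (pell (2*j+2+i) : ℝ)) / (pell (2*j+1+i) : ℝ) ^ 2 with hf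
  have hppos : ∀ i : ℕ, (0:ℝ) < (pell (2*j+1+i) : ℝ) := by
    intro i
    have : (0:ℤ) < pell (2*j+1+i) := by
      rw [show 2*j+1+i = (2*j+i)+1 from by omega]; exact pell_pos _
    exact_mod_cast this
  have hqpos : ∀ i : ℕ, (0:ℝ) < (pell (2*j+2+i) : ℝ) := by
    intro i
    have : (0:ℤ) < pell (2*j+2+i) := by
      rw [show 2*j+2+i = (2*j+1+i)+1 from by omega]; exact pell_pos _
    exact_mod_cast this
  have hfpos : ∀ i, 0 ≤ f i := by
    intro i
    have := hppos i; have := hqpos i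
    positivity
  have hfle : ∀ i, f i ≤ 8 * (1/2:ℝ)^i := by
    intro i
    have hp := hppos i
    have h3 : (pell (2*j+2+i):ℝ) ≤ 3 * (pell (2*j+1+i):ℝ) := by
      have : pell (2*j+2+i) ≤ 3 * pell (2*j+1+i) := by
        rw [show 2*j+2+i = (2*j+i)+2 from by omega, show 2*j+1+i = (2*j+i)+1 from by omega]
        exact pell_succ_le _
      exact_mod_cast this
    have hge : (2:ℝ)^i ≤ (pell (2*j+1+i):ℝ) := by
      have hi : (2:ℤ)^i ≤ 2^(2*j+i) := pow_le_pow_right₀ (by norm_num) (by omega)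
      have := pell_lb (2*j+i)
      have : (2:ℤ)^i ≤ pell (2*j+1+i) := by
        rw [show 2*j+1+i = (2*j+i)+1 from by omega]; exact le_trans hi this
      exact_mod_cast this
    have h2i : (0:ℝ) < (2:ℝ)^i := by positivity
    have : f i ≤ 4/(2:ℝ)^i := by
      rw [hf]
      simp only
      rw [div_le_div_iff₀ (by positivity) h2i]
      nlinarith [hp, h3, hge, mul_le_mul_of_nonneg_left hge hp.le]
    calc f i ≤ 4/(2:ℝ)^i := this
      _ = 4 * (1/2:ℝ)^i := by rw [div_eq_mul_inv, ← inv_pow]; norm_num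
      _ ≤ 8 * (1/2:ℝ)^i := by
          have hh : (0:ℝ) ≤ (1/2:ℝ)^i := by positivity
          nlinarith [hh]
  have hsum : Summable f :=
    Summable.of_nonneg_of_le hfpos hfle
      ((summable_geometric_of_lt_one (by norm_num) (by norm_num)).mul_left 8)
  have he : Summable (fun k => f (2*k)) :=
    hsum.comp_injective (fun x y h => by omega)
  have ho : Summable (fun k => f (2*k+1)) :=
    hsum.comp_injective (fun x y h => by omega)
  set g : ℕ → ℝ := fun k => ((8+4*c2)/(1+c2)^(2*j+1)) * (((1+c2)^2)⁻¹)^k with hg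
  have hx0 : (0:ℝ) ≤ ((1+c2)^2)⁻¹ := by positivity
  have hx1 : ((1+c2)^2)⁻¹ < 1 := by
    rw [inv_lt_one_iff₀]
    right
    nlinarith
  have hgsum : Summable g :=
    (summable_geometric_of_lt_one hx0 hx1).mul_left _
  have hpairle : ∀ k, f (2*k) + f (2*k+1) ≤ g k := by
    intro k
    have hodd : Odd (2*j+1+2*k) := ⟨j+k, by omega⟩
    have hn3 : 3 ≤ 2*j+1+2*k := by omega
    have pb := pair_bound (2*j+1+2*k) hn3 hodd
    have e1 : 2*j+2+2*k = 2*j+1+2*k+1 := by omega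
    have e2 : 2*j+1+(2*k+1) = 2*j+1+2*k+1 := by omega
    have e3 : 2*j+2+(2*k+1) = 2*j+1+2*k+2 := by omega
    have hfg : f (2*k) + f (2*k+1)
        = ((pell (2*j+1+2*k):ℝ)+(pell (2*j+1+2*k+1):ℝ))/(pell (2*j+1+2*k):ℝ)^2
          + ((pell (2*j+1+2*k+1):ℝ)+(pell (2*j+1+2*k+2):ℝ))/(pell (2*j+1+2*k+1):ℝ)^2 := by
      rw [hf]; simp only [e1, e2, e3]
    rw [hfg]
    refine le_trans pb (le_of_eq ?_)
    rw [hg]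
    simp only
    rw [pow_add, pow_mul]
    field_simp
    rw [← mul_pow, mul_one_div_cancel (by positivity), one_pow]
  have key : ∑' i, f i ≤ ∑' k, g k := by
    rw [← tsum_even_add_odd he ho, ← Summable.tsum_add he ho]
    exact Summable.tsum_le_tsum hpairle (he.add ho) hgsum
  have hgval : ∑' k, g k = 2*(2+c2)/(1+c2)^(2*j) := by
    rw [hg]
    simp only
    rw [tsum_mul_left, tsum_geometric_of_lt_one hx0 hx1, pow_succ,
      show (1:ℝ) - ((1+c2)^2)⁻¹ = (2*c2+2)/(1+c2)^2 from by
        field_simp; linear_combination hc]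
    have hne : (1+c2)^(2*j) ≠ 0 := by positivity
    field_simp
    linear_combination (0:ℝ) * hc
  have hslack : (0:ℝ) < 1 / (8 * (1+c2)^(6*j)) := by positivity
  calc ∑' i, f i ≤ ∑' k, g k := key
    _ = 2*(2+c2)/(1+c2)^(2*j) := hgval
    _ < 2*(2+c2)/(1+c2)^(2*j) + 1/(8*(1+c2)^(6*j)) := by linarith
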